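/- arXiv:2404.04336 — 3 statements merged into one kernel-verified Lean document; each statement's English description precedes it below -/
import Mathlib

section
/- Let r > 0 and let G : ℂ → ℂ be holomorphic on the punctured disc B(0, r) \ {0}. If the weighted square integral ∫_{B(0,r)\{0}} |G(ζ)|²·|ζ|² dA(ζ) is finite, then G has at most a simple pole at the origin: there exist A ∈ ℂ and a function h : ℂ → ℂ holomorphic on the full disc B(0, r) such that G(ζ) = A/ζ + h(ζ) for all ζ ∈ B(0, r) \ {0}. -/
open MeasureTheory Complex Metric Set Real Filter Topology
set_option maxHeartbeats 1000000

/-- Circle mean value inequality. -/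
lemma circleMVP {u : ℂ → ℂ} {t : Set ℂ} (ht : IsOpen t) (hu : DifferentiableOn ℂ u t)
    {z : ℂ} {s : ℝ} (hs : 0 < s) (hsub : closedBall z s ⊆ t) :
    2 * π * ‖u z‖ ≤ ∫ θ in (0:ℝ)..(2*π), ‖u (circleMap z s θ)‖ := by
  have hc : ContinuousOn u (closedBall z s) := hu.continuousOn.mono hsub
  have hd : ∀ w ∈ ball z s \ (∅ : Set ℂ), DifferentiableAt ℂ u w := fun w hw =>
    hu.differentiableAt (ht.mem_nhds (hsub (ball_subset_closedBall hw.1)))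
  have H := Complex.circleIntegral_sub_center_inv_smul_of_differentiable_on_off_countable hs
    Set.countable_empty hc hd
  have h1 : ‖(2 * ↑π * I : ℂ) • u z‖ = 2 * π * ‖u z‖ := by
    rw [norm_smul]
    simp [_root_.abs_of_pos Real.pi_pos, mul_assoc]
  have hcont : Continuous fun θ => u (circleMap z s θ) :=
    hc.comp_continuous (continuous_circleMap z s) fun θ => circleMap_mem_closedBall z hs.le θ
  have hne : ∀ θ : ℝ, circleMap z s θ - z ≠ 0 := fun θ =>
    sub_ne_zero.mpr (circleMap_ne_center hs.ne')
  rw [← h1, ← H]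
  unfold circleIntegral
  refine le_trans (intervalIntegral.norm_integral_le_integral_norm Real.two_pi_pos.le) ?_
  simp only [deriv_circleMap]
  apply intervalIntegral.integral_mono_on Real.two_pi_pos.le
  · apply Continuous.intervalIntegrable
    apply Continuous.norm
    exact (((continuous_circleMap 0 s).mul continuous_const)).smul
      ((((continuous_circleMap z s).sub continuous_const).inv₀ hne).smul hcont)
  · exact hcont.norm.intervalIntegrable _ _
  intro θ _
  simp only [circleMap_sub_center, smul_eq_mul, norm_mul,
    norm_inv, norm_circleMap_zero, Complex.norm_I,
    _root_.abs_of_pos hs]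
  rw [mul_one, ← mul_assoc, mul_inv_cancel₀ hs.ne']
  simp

lemma polar_symm_eq (s θ : ℝ) : Complex.polarCoord.symm (s, θ) = circleMap 0 s θ := by
  simp [Complex.polarCoord_symm_apply, circleMap, Complex.exp_mul_I]

lemma areaMVP {u : ℂ → ℂ} {t : Set ℂ} (ht : IsOpen t) (hu : DifferentiableOn ℂ u t)
    {z : ℂ} {d : ℝ} (hd : 0 < d) (hsub : closedBall z d ⊆ t) :
    π * d ^ 2 * ‖u z‖ ≤ ∫ w in ball z d, ‖u w‖ := by
  have hc : ContinuousOn u (closedBall z d) := hu.continuousOn.mono hsub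
  set g : ℂ → ℝ := (ball (0 : ℂ) d).indicator (fun w => ‖u (z + w)‖) with hg
  set h : ℝ × ℝ → ℝ := fun p => p.1 * ‖u (z + circleMap 0 p.1 p.2)‖ with hh
  set S : Set (ℝ × ℝ) := Ioo (0 : ℝ) d ×ˢ Ioo (-π) π with hS
  -- whole space integral of g equals the set integral
  have step2 : ∫ w, g w = ∫ w in ball z d, ‖u w‖ := by
    have : ∀ w : ℂ, g w = (ball z d).indicator (fun w => ‖u w‖) (z + w) := by
      intro w
      simp only [hg, Set.indicator]
      have : z + w ∈ ball z d ↔ w ∈ ball (0 : ℂ) d := by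
        simp [mem_ball, dist_eq_norm]
      by_cases hw : w ∈ ball (0 : ℂ) d <;> simp [hw, this]
    simp_rw [this]
    rw [integral_add_left_eq_self, integral_indicator measurableSet_ball]
  -- polar coordinates
  have step3 : ∫ p in polarCoord.target, p.1 • g (Complex.polarCoord.symm p) = ∫ w, g w :=
    Complex.integral_comp_polarCoord_symm g
  have step4 : ∫ p in polarCoord.target, p.1 • g (Complex.polarCoord.symm p)
      = ∫ p in S, h p := by
    have hTS : polarCoord.target ∩ S = S := by
      apply Set.inter_eq_self_of_subset_right
      rw [show polarCoord.target = Ioi (0:ℝ) ×ˢ Ioo (-π) π from rfl]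
      exact Set.prod_mono Ioo_subset_Ioi_self subset_rfl
    rw [show (∫ p in S, h p) = ∫ p in polarCoord.target, S.indicator h p by
      rw [setIntegral_indicator (measurableSet_Ioo.prod measurableSet_Ioo), hTS]]
    apply setIntegral_congr_fun (polarCoord.open_target.measurableSet)
    intro p hp
    rw [show polarCoord.target = Ioi (0:ℝ) ×ˢ Ioo (-π) π from rfl] at hp
    obtain ⟨hp1, hp2⟩ := hp
    have habs : ‖Complex.polarCoord.symm p‖ = p.1 := by
      rw [Complex.norm_polarCoord_symm, _root_.abs_of_pos hp1]
    have hmem : Complex.polarCoord.symm p ∈ ball (0 : ℂ) d ↔ p.1 < d := by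
      simp only [mem_ball, Complex.dist_eq, sub_zero, habs]
    simp only [hg, hh, hS, Set.indicator, smul_eq_mul]
    by_cases hpd : p.1 < d
    · have : (p.1, p.2) ∈ Ioo (0:ℝ) d ×ˢ Ioo (-π) π := ⟨⟨hp1, hpd⟩, hp2⟩
      simp only [hmem.mpr hpd, if_true, ← polar_symm_eq]
      simp [this]
    · have : (p.1, p.2) ∉ Ioo (0:ℝ) d ×ˢ Ioo (-π) π := fun hmem' => hpd hmem'.1.2
      simp only [hmem, hpd, if_false]
      simp [this]
  -- integrability of h on S
  have hKcomp : IsCompact (Icc (0:ℝ) d ×ˢ Icc (-π) π) := isCompact_Icc.prod isCompact_Icc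
  have hcm : Continuous fun p : ℝ × ℝ => z + circleMap 0 p.1 p.2 := by
    simp only [circleMap_zero]
    exact continuous_const.add ((Complex.continuous_ofReal.comp continuous_fst).mul
      (Complex.continuous_exp.comp ((Complex.continuous_ofReal.comp continuous_snd).mul
        continuous_const)))
  have hconth : ContinuousOn h (Icc (0:ℝ) d ×ˢ Icc (-π) π) := by
    apply ContinuousOn.mul continuous_fst.continuousOn
    apply ContinuousOn.norm
    apply hc.comp hcm.continuousOn
    intro p hp
    simp only [mem_closedBall, dist_eq_norm, add_sub_cancel_left]
    rw [show ‖circleMap 0 p.1 p.2‖ = |p.1| from by simp]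
    rw [_root_.abs_of_nonneg hp.1.1]
    exact hp.1.2
  have hInt2 : IntegrableOn h (Ioo (0:ℝ) d ×ˢ Ioo (-π) π) (volume.prod volume) := by
    rw [← Measure.volume_eq_prod]
    exact (hconth.integrableOn_compact hKcomp).mono_set
      (Set.prod_mono Ioo_subset_Icc_self Ioo_subset_Icc_self)
  have step6 : ∫ p in S, h p = ∫ s in Ioo (0:ℝ) d, ∫ θ in Ioo (-π) π, h (s, θ) := by
    rw [hS, Measure.volume_eq_prod]
    exact setIntegral_prod h hInt2
  have houter_int : IntegrableOn (fun s => ∫ θ in Ioo (-π) π, h (s, θ)) (Ioo (0:ℝ) d) := by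
    have h3 : Integrable h ((volume.restrict (Ioo (0:ℝ) d)).prod
        (volume.restrict (Ioo (-π) π))) := by
      rw [Measure.prod_restrict]
      exact hInt2
    exact h3.integral_prod_left
  have hpoint : ∀ s ∈ Ioo (0:ℝ) d, 2 * π * ‖u z‖ * s ≤ ∫ θ in Ioo (-π) π, h (s, θ) := by
    intro s hsmem
    have hs0 : 0 < s := hsmem.1
    have e2 : (∫ θ in Ioo (-π) π, h (s, θ))
        = s * ∫ θ in (0:ℝ)..(2*π), ‖u (circleMap z s θ)‖ := by
      have e1 : ∀ θ : ℝ, h (s, θ) = s * ‖u (circleMap z s θ)‖ := by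
        intro θ
        simp only [hh]
        congr 2
        rw [← circleMap_sub_center z s θ, add_sub_cancel]
      simp_rw [e1]
      rw [integral_const_mul]
      congr 1
      rw [← integral_Ioc_eq_integral_Ioo,
        ← intervalIntegral.integral_of_le (by linarith [Real.pi_pos] : -π ≤ π)]
      have hper : Function.Periodic (fun θ => ‖u (circleMap z s θ)‖) (2 * π) := fun θ => by
        simp [periodic_circleMap z s θ]
      have hpere := hper.intervalIntegral_add_eq (-π) 0
      rw [show -π + 2 * π = π by ring, zero_add] at hpere
      exact hpere
    rw [e2]
    calc 2 * π * ‖u z‖ * s = s * (2 * π * ‖u z‖) := by ring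
    _ ≤ s * ∫ θ in (0:ℝ)..(2*π), ‖u (circleMap z s θ)‖ := by
        apply mul_le_mul_of_nonneg_left _ hs0.le
        exact circleMVP ht hu hs0 ((closedBall_subset_closedBall hsmem.2.le).trans hsub)
  have hlow : IntegrableOn (fun s => 2 * π * ‖u z‖ * s) (Ioo (0:ℝ) d) := by
    exact ((continuous_const.mul continuous_id).integrableOn_Icc).mono_set Ioo_subset_Icc_self
  have step8 := setIntegral_mono_on hlow houter_int measurableSet_Ioo hpoint
  have hcomp : (∫ s in Ioo (0:ℝ) d, 2 * π * ‖u z‖ * s) = π * d ^ 2 * ‖u z‖ := by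
    rw [← integral_Ioc_eq_integral_Ioo, ← intervalIntegral.integral_of_le hd.le,
      intervalIntegral.integral_const_mul, integral_id]
    ring
  rw [← step2, ← step3, step4, step6]
  rw [hcomp] at step8
  exact step8

lemma pointwise_bound {u : ℂ → ℂ} {D : Set ℂ} (hD : IsOpen D) (hu : DifferentiableOn ℂ u D)
    (husq : IntegrableOn (fun w => ‖u w‖ ^ 2) D volume) {z : ℂ} {d : ℝ} (hd : 0 < d)
    (hsub : closedBall z d ⊆ D) :
    Real.sqrt π * d * ‖u z‖ ≤ Real.sqrt (∫ w in ball z d, ‖u w‖ ^ 2) := by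
  have hMVP := areaMVP hD hu hd hsub
  set μ' := volume.restrict (ball z d) with hμ'
  haveI : IsFiniteMeasure μ' := ⟨by
    rw [hμ', Measure.restrict_apply_univ]; exact measure_ball_lt_top⟩
  have hmeasu : AEStronglyMeasurable (fun w => ‖u w‖) μ' :=
    ((hu.continuousOn.mono (ball_subset_closedBall.trans hsub)).norm).aestronglyMeasurable
      measurableSet_ball
  have hsq : Integrable (fun w => ‖u w‖ ^ 2) μ' :=
    husq.mono_set (ball_subset_closedBall.trans hsub)
  have hf2 : MemLp (fun w => ‖u w‖) (ENNReal.ofReal 2) μ' := by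
    rw [show ENNReal.ofReal 2 = 2 by norm_num]
    exact (memLp_two_iff_integrable_sq hmeasu).mpr hsq
  have h12 : MemLp (fun _ : ℂ => (1 : ℝ)) (ENNReal.ofReal 2) μ' := memLp_const 1
  have hpq : Real.HolderConjugate 2 2 := Real.holderConjugate_iff.mpr ⟨one_lt_two, by norm_num⟩
  have hHolder := integral_mul_le_Lp_mul_Lq_of_nonneg hpq
    (Filter.Eventually.of_forall fun w => norm_nonneg (u w))
    (Filter.Eventually.of_forall fun _ => zero_le_one) hf2 h12
  simp only [mul_one, Real.one_rpow] at hHolder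
  have hvol : ∫ _ in ball z d, (1 : ℝ) = π * d ^ 2 := by
    rw [setIntegral_const, smul_eq_mul, mul_one, measureReal_def, Complex.volume_ball]
    rw [ENNReal.toReal_mul, ENNReal.toReal_pow, ENNReal.toReal_ofReal hd.le]
    simp [NNReal.coe_real_pi]
    ring
  have hrpow : ∀ x : ℝ, x ^ (2:ℝ) = x ^ 2 := fun x => by
    rw [show (2:ℝ) = ((2:ℕ):ℝ) by norm_num, Real.rpow_natCast]
  simp only [hrpow] at hHolder
  rw [hvol] at hHolder
  have hInonneg : 0 ≤ ∫ w in ball z d, ‖u w‖ ^ 2 :=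
    setIntegral_nonneg measurableSet_ball fun w _ => sq_nonneg _
  have hsqrt : (∫ w in ball z d, ‖u w‖ ^ 2) ^ ((1:ℝ)/2) = Real.sqrt (∫ w in ball z d, ‖u w‖ ^ 2) := by
    rw [Real.sqrt_eq_rpow]
  have hsqrt2 : (π * d ^ 2) ^ ((1:ℝ)/2) = Real.sqrt π * d := by
    rw [← Real.sqrt_eq_rpow, Real.sqrt_mul Real.pi_pos.le, Real.sqrt_sq hd.le]
  rw [hsqrt, hsqrt2] at hHolder
  -- combine: π d² ‖u z‖ ≤ ∫‖u‖ ≤ √I * (√π d)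
  have hchain : π * d ^ 2 * ‖u z‖ ≤ Real.sqrt (∫ w in ball z d, ‖u w‖ ^ 2) * (Real.sqrt π * d) :=
    le_trans hMVP hHolder
  have hπd : 0 < Real.sqrt π * d := mul_pos (Real.sqrt_pos.mpr Real.pi_pos) hd
  have hsq' : (Real.sqrt π * d) * (Real.sqrt π * d) = π * d ^ 2 := by
    have := Real.sq_sqrt Real.pi_pos.le
    nlinarith
  apply le_of_mul_le_mul_left _ hπd
  calc Real.sqrt π * d * (Real.sqrt π * d * ‖u z‖)
      = π * d ^ 2 * ‖u z‖ := by rw [← mul_assoc, hsq']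
    _ ≤ Real.sqrt (∫ w in ball z d, ‖u w‖ ^ 2) * (Real.sqrt π * d) := hchain
    _ = Real.sqrt π * d * Real.sqrt (∫ w in ball z d, ‖u w‖ ^ 2) := by ring

/-- Weighted-L² control forces at most a simple pole at the origin. -/
theorem simple_pole_of_weighted_L2
    (r : ℝ) (hr : 0 < r) (G : ℂ → ℂ)
    (hG : DifferentiableOn ℂ G (ball (0 : ℂ) r \ {0}))
    (hL2 : IntegrableOn (fun ζ => (‖G ζ‖) ^ 2 * (‖ζ‖) ^ 2)
      (ball (0 : ℂ) r \ {0}) volume) :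
    ∃ (A : ℂ) (h : ℂ → ℂ), DifferentiableOn ℂ h (ball (0 : ℂ) r) ∧
      ∀ ζ ∈ ball (0 : ℂ) r \ {0}, G ζ = A / ζ + h ζ := by
  set D : Set ℂ := ball (0 : ℂ) r \ {0} with hD
  have hDmeas : MeasurableSet D := measurableSet_ball.diff (measurableSet_singleton 0)
  have hDopen : IsOpen D := isOpen_ball.sdiff isClosed_singleton
  set u : ℂ → ℂ := fun ζ => ζ * G ζ with hu
  have hud : DifferentiableOn ℂ u D := differentiableOn_id.mul hG
  have husq : IntegrableOn (fun w => ‖u w‖ ^ 2) D volume := by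
    apply hL2.congr_fun _ hDmeas
    intro w _
    simp only [hu, norm_mul]
    ring
  set Iball : ℂ → ℝ := fun z => ∫ w in ball z (‖z‖ / 2), ‖u w‖ ^ 2 with hIb
  have hball_sub : ∀ z : ℂ, z ≠ 0 → ‖z‖ < 2 * r / 3 →
      closedBall z (‖z‖ / 2) ⊆ D := by
    intro z hz hzr w hw
    rw [mem_closedBall, Complex.dist_eq] at hw
    have hz0 : 0 < ‖z‖ := norm_pos_iff.mpr hz
    have hup : ‖w‖ ≤ 3 * ‖z‖ / 2 := by
      have h' := norm_sub_norm_le w z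
      linarith
    have hlow : ‖z‖ / 2 ≤ ‖w‖ := by
      have h' := norm_sub_norm_le z w
      rw [show ‖z - w‖ = ‖w - z‖ by rw [← norm_neg, neg_sub]]
        at h'
      linarith
    constructor
    · rw [mem_ball, Complex.dist_eq, sub_zero]
      linarith
    · intro hw0
      rw [Set.mem_singleton_iff] at hw0
      rw [hw0, norm_zero] at hlow
      linarith
  have hIbnonneg : ∀ z, 0 ≤ Iball z := fun z =>
    setIntegral_nonneg measurableSet_ball fun w _ => sq_nonneg _
  -- key smallness of integrals near 0
  have key : ∀ ε > 0, ∃ δ > 0, δ ≤ 2 * r / 3 ∧ ∀ z : ℂ, z ≠ 0 → ‖z‖ < δ →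
      Iball z < ε := by
    intro ε hε
    set μ := volume.restrict D with hμ
    set F : ℕ → ℂ → ℝ := fun n w => (ball (0 : ℂ) (1 / (n + 1))).indicator
      (fun w => ‖u w‖ ^ 2) w with hF
    have hFmeas : ∀ n, AEStronglyMeasurable (F n) μ := fun n =>
      husq.aestronglyMeasurable.indicator measurableSet_ball
    have hFbound : ∀ n, ∀ᵐ w ∂μ, ‖F n w‖ ≤ ‖u w‖ ^ 2 := by
      intro n
      apply Filter.Eventually.of_forall
      intro w
      rw [Real.norm_of_nonneg (Set.indicator_nonneg (fun w _ => sq_nonneg ‖u w‖) w)]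
      exact Set.indicator_le_self' (fun w _ => sq_nonneg ‖u w‖) w
    have hFtend : ∀ᵐ w ∂μ, Filter.Tendsto (fun n => F n w) Filter.atTop (𝓝 0) := by
      filter_upwards [ae_restrict_mem hDmeas] with w hw
      have hw0 : (0:ℝ) < ‖w‖ := norm_pos_iff.mpr (fun h => hw.2 (by simp [h]))
      obtain ⟨N, hN⟩ := exists_nat_one_div_lt hw0
      apply tendsto_atTop_of_eventually_const (i₀ := N)
      intro n hn
      have h1 : (1 : ℝ) / (n + 1) ≤ 1 / (N + 1) := by
        apply one_div_le_one_div_of_le (by positivity)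
        exact_mod_cast by omega
      have : w ∉ ball (0 : ℂ) (1 / (n + 1)) := by
        rw [mem_ball, Complex.dist_eq, sub_zero]
        push_neg
        calc (1:ℝ)/(n+1) ≤ 1/(N+1) := h1
          _ ≤ ‖w‖ := hN.le
      exact Set.indicator_of_notMem this _
    have hDCT := tendsto_integral_of_dominated_convergence _ hFmeas husq hFbound hFtend
    rw [integral_zero] at hDCT
    obtain ⟨N, hN⟩ := (hDCT.eventually (gt_mem_nhds hε)).exists
    refine ⟨min (2 / 3 * (1 / (N + 1))) (2 * r / 3), by positivity, min_le_right _ _, ?_⟩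
    intro z hz hzδ
    have hz1 : ‖z‖ < 2 * r / 3 := lt_of_lt_of_le hzδ (min_le_right _ _)
    have hz2 : ‖z‖ < 2 / 3 * (1 / (N + 1)) := lt_of_lt_of_le hzδ (min_le_left _ _)
    have hsub2 : ball z (‖z‖ / 2) ⊆ ball (0 : ℂ) (1 / (N + 1)) ∩ D := by
      intro w hw
      refine ⟨?_, hball_sub z hz hz1 (ball_subset_closedBall hw)⟩
      rw [mem_ball, Complex.dist_eq] at hw ⊢
      rw [sub_zero]
      have h' := norm_sub_norm_le w z
      linarith
    have h3 : Iball z ≤ ∫ w, F N w ∂μ := by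
      rw [hF, integral_indicator measurableSet_ball, hμ,
        Measure.restrict_restrict measurableSet_ball]
      apply setIntegral_mono_set (husq.mono_set Set.inter_subset_right)
        (Filter.Eventually.of_forall fun w => sq_nonneg _)
        (HasSubset.Subset.eventuallyLE hsub2)
    exact lt_of_le_of_lt h3 hN
  have hIballt : Filter.Tendsto Iball (𝓝[≠] (0:ℂ)) (𝓝 0) := by
    rw [Metric.tendsto_nhdsWithin_nhds]
    intro ε hε
    obtain ⟨δ, hδ, _, hkey⟩ := key ε hε
    refine ⟨δ, hδ, fun {z} hz hdist => ?_⟩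
    rw [Complex.dist_eq, sub_zero] at hdist
    rw [Real.dist_eq, sub_zero, _root_.abs_of_nonneg (hIbnonneg z)]
    exact hkey z hz hdist
  -- squeeze
  have htend : Filter.Tendsto (fun z : ℂ => z ^ 2 * G z) (𝓝[≠] (0:ℂ)) (𝓝 0) := by
    apply squeeze_zero_norm' (a := fun z => 2 / Real.sqrt π * Real.sqrt (Iball z))
    · have hev : ∀ᶠ z : ℂ in 𝓝[≠] (0:ℂ), ‖z‖ < 2 * r / 3 ∧ z ≠ 0 := by
        apply Filter.eventually_inf_principal.mpr
        have : ∀ᶠ z : ℂ in 𝓝 0, ‖z‖ < 2 * r / 3 := by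
          have := Metric.ball_mem_nhds (0:ℂ) (by positivity : (0:ℝ) < 2 * r / 3)
          filter_upwards [this] with z hz
          rwa [mem_ball, Complex.dist_eq, sub_zero] at hz
        filter_upwards [this] with z h1 h2
        exact ⟨h1, h2⟩
      filter_upwards [hev] with z hz
      obtain ⟨h1, h2⟩ := hz
      have hz0 : 0 < ‖z‖ := norm_pos_iff.mpr h2
      have hd : 0 < ‖z‖ / 2 := by positivity
      have hb := pointwise_bound hDopen hud husq hd (hball_sub z h2 h1)
      have hsπ : 0 < Real.sqrt π := Real.sqrt_pos.mpr Real.pi_pos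
      have hnorm : ‖z ^ 2 * G z‖ = ‖z‖ * ‖u z‖ := by
        simp only [hu, norm_mul, norm_pow]
        ring
      rw [hnorm]
      rw [div_mul_eq_mul_div, le_div_iff₀ hsπ]
      calc ‖z‖ * ‖u z‖ * Real.sqrt π
          = 2 * (Real.sqrt π * (‖z‖ / 2) * ‖u z‖) := by ring
        _ ≤ 2 * Real.sqrt (Iball z) := by linarith [hb]
    · have h1 : Filter.Tendsto (fun z : ℂ => Real.sqrt (Iball z)) (𝓝[≠] (0:ℂ)) (𝓝 0) := by
        have := (Real.continuous_sqrt.tendsto' 0 0 Real.sqrt_zero).comp hIballt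
        exact this
      have := h1.const_mul (2 / Real.sqrt π)
      simpa using this
  -- removable singularity
  set f : ℂ → ℂ := fun ζ => ζ ^ 2 * G ζ with hf
  have hfd : DifferentiableOn ℂ f D := (differentiable_pow 2).differentiableOn.mul hG
  have hlo : f =o[𝓝[≠] (0:ℂ)] fun z => (z - 0)⁻¹ := by
    rw [Asymptotics.isLittleO_iff]
    intro c hc
    have hev1 : ∀ᶠ z : ℂ in 𝓝[≠] (0:ℂ), ‖f z‖ < c * r⁻¹ := by
      have h0 : Filter.Tendsto (fun z : ℂ => ‖f z‖) (𝓝[≠] (0:ℂ)) (𝓝 0) := by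
        simpa using htend.norm
      exact h0.eventually_lt_const (by positivity)
    have hev2 : ∀ᶠ z : ℂ in 𝓝[≠] (0:ℂ), ‖z‖ < r ∧ z ≠ 0 := by
      apply Filter.eventually_inf_principal.mpr
      have : ∀ᶠ z : ℂ in 𝓝 0, ‖z‖ < r := by
        filter_upwards [Metric.ball_mem_nhds (0:ℂ) hr] with z hz
        rwa [mem_ball, Complex.dist_eq, sub_zero] at hz
      filter_upwards [this] with z h1 h2
      exact ⟨h1, h2⟩
    filter_upwards [hev1, hev2] with z h1 h2
    obtain ⟨hzr, hz0⟩ := h2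
    have hz0' : 0 < ‖z‖ := norm_pos_iff.mpr hz0
    rw [sub_zero]
    have : ‖(z : ℂ)⁻¹‖ = (‖z‖)⁻¹ := by
      simp
    rw [this]
    calc ‖f z‖ ≤ c * r⁻¹ := h1.le
      _ ≤ c * (‖z‖)⁻¹ := by
          apply mul_le_mul_of_nonneg_left _ hc.le
          apply inv_anti₀ hz0' hzr.le
  set L := limUnder (𝓝[≠] (0:ℂ)) f with hLdef
  have hL : L = 0 := htend.limUnder_eq
  set F := Function.update f 0 L with hFdef
  have hf0 : f 0 = 0 := by simp [hf]
  have hlo' : (fun z => f z - f 0) =o[𝓝[≠] (0:ℂ)] fun z => (z - 0)⁻¹ := by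
    simpa [hf0] using hlo
  have hFdiff : DifferentiableOn ℂ F (ball (0:ℂ) r) :=
    Complex.differentiableOn_update_limUnder_of_isLittleO (ball_mem_nhds (0:ℂ) hr) hfd hlo'
  have hF0 : F 0 = 0 := by rw [hFdef, Function.update_self]; exact hL
  set F1 := dslope F 0 with hF1def
  have hF1diff : DifferentiableOn ℂ F1 (ball (0:ℂ) r) :=
    (Complex.differentiableOn_dslope (ball_mem_nhds (0:ℂ) hr)).mpr hFdiff
  refine ⟨F1 0, dslope F1 0,
    (Complex.differentiableOn_dslope (ball_mem_nhds (0:ℂ) hr)).mpr hF1diff, ?_⟩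
  intro ζ hζ
  have hζ0 : ζ ≠ 0 := fun h => hζ.2 (by simp [h])
  have hFζ : F ζ = ζ ^ 2 * G ζ := by rw [hFdef, Function.update_of_ne hζ0]
  have hF1ζ : F1 ζ = ζ * G ζ := by
    rw [hF1def, dslope_of_ne _ hζ0, slope_def_field, hFζ, hF0]
    field_simp
    ring
  rw [dslope_of_ne _ hζ0, slope_def_field, hF1ζ]
  field_simp
  ring
end

section
/- Double reflection from a quadrant to the punctured disc: let r > 0 and let F : ℂ → ℂ be holomorphic on the open quarter-disc Q(r) := {ζ : |ζ| < r ∧ Re ζ > 0 ∧ Im ζ > 0} and continuous on {ζ : |ζ| < r ∧ Re ζ ≥ 0 ∧ Im ζ ≥ 0} \ {0}. Assume Re F(x) = 0 for every real x ∈ (0, r) and Im F(iy) = 0 for every real y ∈ (0, r). Then there exists G : ℂ → ℂ holomorphic on the punctured disc B(0, r) \ {0} such that G(ζ) = F(ζ) for every ζ with |ζ| < r, Re ζ ≥ 0, Im ζ ≥ 0, ζ ≠ 0. Moreover, if additionally ∫_{Q(r)} |F(ζ)|²·|ζ|² dA(ζ) < ∞, then ∫_{B(0,r)\{0}} |G(ζ)|²·|ζ|²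 dA(ζ) = 4·∫_{Q(r)} |F(ζ)|²·|ζ|² dA(ζ) < ∞. -/
open MeasureTheory Complex Metric
open Set intervalIntegral
set_option maxHeartbeats 1000000


lemma hasDerivAt_conj_comp {F : ℂ → ℂ} {z d : ℂ} (h : HasDerivAt F d ((starRingEnd ℂ) z)) :
    HasDerivAt (fun w => (starRingEnd ℂ) (F ((starRingEnd ℂ) w))) ((starRingEnd ℂ) d) z := by
  rw [hasDerivAt_iff_tendsto_slope] at h ⊢
  have hmap : Filter.Tendsto (starRingEnd ℂ) (nhdsWithin z {z}ᶜ)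
      (nhdsWithin ((starRingEnd ℂ) z) {(starRingEnd ℂ) z}ᶜ) := by
    have h1 := (Complex.conjCLE.toHomeomorph).map_punctured_nhds_eq z
    exact h1 ▸ Filter.tendsto_map
  have := (Complex.continuous_conj.tendsto d).comp (h.comp hmap)
  refine this.congr' ?_
  filter_upwards [self_mem_nhdsWithin] with w hw
  have hwz : w - z ≠ 0 := sub_ne_zero.2 hw
  simp only [Function.comp_apply, slope_def_field, map_div₀, map_sub]
  congr 1
  simp

lemma abs_sub_le_of_uIoc {a b x : ℝ} (hx : x ∈ Set.uIoc a b) : |x - a| ≤ |b - a| := by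
  rw [Set.uIoc] at hx
  obtain ⟨h1, h2⟩ := hx
  rcases le_total a b with h | h
  · simp only [min_eq_left h, max_eq_right h] at h1 h2
    rw [_root_.abs_of_nonneg (by linarith), _root_.abs_of_nonneg (by linarith)]
    linarith
  · simp only [min_eq_right h, max_eq_left h] at h1 h2
    rw [_root_.abs_of_nonpos (by linarith), _root_.abs_of_nonpos (by linarith)]
    linarith

lemma moreraHorizontal {U : Set ℂ} (hU : IsOpen U) {f : ℂ → ℂ}
    (hc : ContinuousOn f U) (hd : DifferentiableOn ℂ f (U \ {z : ℂ | z.im = 0})) :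
    DifferentiableOn ℂ f U := by
  intro z₀ hz₀
  by_cases him : z₀.im = 0
  swap
  · have hopen : IsOpen (U \ {z : ℂ | z.im = 0}) :=
      hU.sdiff (isClosed_eq Complex.continuous_im continuous_const)
    exact (hd.differentiableAt (hopen.mem_nhds ⟨hz₀, him⟩)).differentiableWithinAt
  -- main case : z₀ on the real line
  obtain ⟨ε, hε, hball⟩ := Metric.isOpen_iff.1 hU z₀ hz₀
  set δ := ε / 2 with hδdef
  have hδ : 0 < δ := by positivity
  set x₀ := z₀.re with hx₀
  set S : Set ℂ := Ioo (x₀ - δ) (x₀ + δ) ×ℂ Ioo (-δ) δ with hSdef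
  have hSopen : IsOpen S := isOpen_Ioo.reProdIm isOpen_Ioo
  have hSU : S ⊆ U := by
    intro z hz
    apply hball
    rw [Metric.mem_ball, Complex.dist_eq]
    calc ‖z - z₀‖ ≤ |(z - z₀).re| + |(z - z₀).im| :=
          Complex.norm_le_abs_re_add_abs_im _
      _ < δ + δ := by
          obtain ⟨h1, h2⟩ := hz
          simp only [Complex.sub_re, Complex.sub_im, him, sub_zero]
          apply add_lt_add
          · rw [abs_lt]; simp only [mem_preimage, mem_Ioo] at h1; constructor <;> [linarith [h1.1]; linarith [h1.2]]
          · rw [abs_lt]; simp only [mem_preimage, mem_Ioo] at h2; exact h2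
      _ = ε := by rw [hδdef]; ring
  have hz₀S : z₀ ∈ S := by
    constructor <;> simp only [mem_preimage, mem_Ioo, him] <;> constructor <;> linarith
  -- membership helpers
  have hmemS : ∀ x y : ℝ, x ∈ Ioo (x₀ - δ) (x₀ + δ) → y ∈ Ioo (-δ) δ → (↑x + ↑y * I) ∈ S := by
    intro x y hx hy
    constructor <;> simp only [mem_preimage, Complex.add_re, Complex.add_im, Complex.ofReal_re,
      Complex.ofReal_im, Complex.mul_re, Complex.mul_im, Complex.I_re, Complex.I_im] <;> simpa
  have hreS : ∀ z ∈ S, z.re ∈ Ioo (x₀ - δ) (x₀ + δ) := fun z hz => hz.1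
  have himS : ∀ z ∈ S, z.im ∈ Ioo (-δ) δ := fun z hz => hz.2
  have h0mem : (0:ℝ) ∈ Ioo (-δ) δ := by constructor <;> linarith
  -- interval integrability of horizontal and vertical segments
  have hseg_h : ∀ a b y : ℝ, a ∈ Ioo (x₀ - δ) (x₀ + δ) → b ∈ Ioo (x₀ - δ) (x₀ + δ) →
      y ∈ Ioo (-δ) δ → IntervalIntegrable (fun t : ℝ => f (↑t + ↑y * I)) volume a b := by
    intro a b y ha hb hy
    apply ContinuousOn.intervalIntegrable
    apply (hc.mono hSU).comp
      ((Complex.continuous_ofReal.add continuous_const).continuousOn)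
    intro t ht
    exact hmemS t y (Set.ordConnected_Ioo.uIcc_subset ha hb ht) hy
  have hseg_v : ∀ x a b : ℝ, x ∈ Ioo (x₀ - δ) (x₀ + δ) → a ∈ Ioo (-δ) δ → b ∈ Ioo (-δ) δ →
      IntervalIntegrable (fun t : ℝ => f (↑x + ↑t * I)) volume a b := by
    intro x a b hx ha hb
    apply ContinuousOn.intervalIntegrable
    apply (hc.mono hSU).comp
      ((continuous_const.add ((Complex.continuous_ofReal).mul continuous_const)).continuousOn)
    intro t ht
    exact hmemS x t hx (Set.ordConnected_Ioo.uIcc_subset ha hb ht)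
  -- primitive
  set P : ℂ → ℂ := fun z => (∫ t : ℝ in x₀..z.re, f ↑t) +
      I * ∫ t : ℝ in (0:ℝ)..z.im, f (↑z.re + ↑t * I) with hPdef
  -- rectangle identity
  have hrect : ∀ z ∈ S, ∀ w ∈ S,
      (∫ x : ℝ in z.re..w.re, f ↑x) - (∫ x : ℝ in z.re..w.re, f (↑x + ↑z.im * I)) +
        I * (∫ y : ℝ in (0:ℝ)..z.im, f (↑w.re + ↑y * I)) -
        I * (∫ y : ℝ in (0:ℝ)..z.im, f (↑z.re + ↑y * I)) = 0 := by
    intro z hz w hw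
    have key := Complex.integral_boundary_rect_eq_zero_of_continuousOn_of_differentiableOn f
      (↑z.re) (↑w.re + ↑z.im * I) ?_ ?_
    · simpa [Complex.ofReal_re, Complex.ofReal_im, smul_eq_mul] using key
    · apply (hc.mono hSU).mono
      intro ζ hζ
      obtain ⟨h1, h2⟩ := hζ
      simp only [mem_preimage, Complex.ofReal_re, Complex.ofReal_im, Complex.add_re,
        Complex.add_im, Complex.mul_re, Complex.mul_im, Complex.I_re, Complex.I_im] at h1 h2
      constructor
      · exact Set.ordConnected_Ioo.uIcc_subset (hreS z hz) (by simpa using hreS w hw) (by simpa using h1)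
      · exact Set.ordConnected_Ioo.uIcc_subset h0mem (by simpa using himS z hz) (by simpa using h2)
    · apply hd.mono
      intro ζ hζ
      obtain ⟨h1, h2⟩ := hζ
      simp only [mem_preimage, mem_Ioo, Complex.ofReal_re, Complex.ofReal_im, Complex.add_re,
        Complex.add_im, Complex.mul_re, Complex.mul_im, Complex.I_re, Complex.I_im] at h1 h2
      have h2' : ζ.im ∈ Ioo (min 0 z.im) (max 0 z.im) := by simpa using h2
      have hζne : ζ.im ≠ 0 := by
        intro hc0
        rw [hc0] at h2'
        rcases lt_or_ge 0 z.im with h | h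
        · simp [min_eq_left h.le] at h2'
        · simp [max_eq_left h] at h2'
      refine ⟨hSU ?_, hζne⟩
      constructor
      · exact Set.ordConnected_Ioo.uIcc_subset (hreS z hz) (by simpa using hreS w hw)
          (Set.Ioo_subset_Icc_self (by simpa using h1))
      · exact Set.ordConnected_Ioo.uIcc_subset h0mem (himS z hz)
          (Set.Ioo_subset_Icc_self (by simpa using h2'))
  -- derivative of the primitive
  have HD : ∀ z ∈ S, HasDerivAt P (f z) z := by
    intro z hz
    rw [hasDerivAt_iff_isLittleO]
    rw [Asymptotics.isLittleO_iff]
    intro c hc'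
    -- continuity at z
    have hcz : ContinuousAt f z := hc.continuousAt (hU.mem_nhds (hSU hz))
    obtain ⟨δ₁, hδ₁pos, hf₁⟩ := Metric.continuousAt_iff.1 hcz (c / 2) (by linarith)
    obtain ⟨δS, hδSpos, hballS⟩ := Metric.isOpen_iff.1 hSopen z hz
    set δ' := min δ₁ δS with hδ'def
    have hδ'pos : 0 < δ' := lt_min hδ₁pos hδSpos
    have hδ' : ∀ ⦃y : ℂ⦄, dist y z < δ' → dist (f y) (f z) ≤ c / 2 ∧ y ∈ S := by
      intro y hy
      exact ⟨(hf₁ (hy.trans_le (min_le_left _ _))).le,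
        hballS (Metric.mem_ball.2 (hy.trans_le (min_le_right _ _)))⟩
    filter_upwards [Metric.ball_mem_nhds z (by positivity : (0:ℝ) < δ' / 2)] with w hw
    have hwz : dist w z < δ' / 2 := Metric.mem_ball.1 hw
    have hwS : w ∈ S := (hδ' (by exact hwz.trans (by linarith))).2
    -- identity : P w - P z = horizontal + vertical pieces at level z.im / w.re
    have split1 : (∫ t : ℝ in x₀..z.re, f ↑t) + (∫ t : ℝ in z.re..w.re, f ↑t)
        = ∫ t : ℝ in x₀..w.re, f ↑t := by
      have := intervalIntegral.integral_add_adjacent_intervals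
        (f := fun t : ℝ => f ↑t) (μ := volume) (a := x₀) (b := z.re) (c := w.re) ?_ ?_
      · exact this
      · have := hseg_h x₀ z.re 0 (by constructor <;> linarith) (hreS z hz) h0mem
        simpa using this
      · have := hseg_h z.re w.re 0 (hreS z hz) (hreS w hwS) h0mem
        simpa using this
    have split2 : (∫ t : ℝ in (0:ℝ)..z.im, f (↑w.re + ↑t * I)) +
        (∫ t : ℝ in z.im..w.im, f (↑w.re + ↑t * I))
        = ∫ t : ℝ in (0:ℝ)..w.im, f (↑w.re + ↑t * I) :=
      intervalIntegral.integral_add_adjacent_intervals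
        (hseg_v w.re 0 z.im (hreS w hwS) h0mem (himS z hz))
        (hseg_v w.re z.im w.im (hreS w hwS) (himS z hz) (himS w hwS))
    have key : P w - P z = (∫ x : ℝ in z.re..w.re, f (↑x + ↑z.im * I)) +
        I * ∫ t : ℝ in z.im..w.im, f (↑w.re + ↑t * I) := by
      have hr := hrect z hz w hwS
      simp only [hPdef]
      linear_combination hr - split1 - I * split2
    -- decompose the error term
    have hint1 : IntervalIntegrable (fun x : ℝ => f (↑x + ↑z.im * I)) volume z.re w.re :=
      hseg_h z.re w.re z.im (hreS z hz) (hreS w hwS) (himS z hz)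
    have hint2 : IntervalIntegrable (fun t : ℝ => f (↑w.re + ↑t * I)) volume z.im w.im :=
      hseg_v w.re z.im w.im (hreS w hwS) (himS z hz) (himS w hwS)
    have decomp : P w - P z - (w - z) • f z =
        (∫ x : ℝ in z.re..w.re, (f (↑x + ↑z.im * I) - f z)) +
        I * ∫ t : ℝ in z.im..w.im, (f (↑w.re + ↑t * I) - f z) := by
      rw [key, intervalIntegral.integral_sub hint1 intervalIntegrable_const,
        intervalIntegral.integral_sub hint2 intervalIntegrable_const,
        intervalIntegral.integral_const, intervalIntegral.integral_const]
      have hzw : w - z = ((w.re - z.re : ℝ) : ℂ) + ((w.im - z.im : ℝ) : ℂ) * I := by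
        simp [Complex.ext_iff]
      rw [smul_eq_mul, hzw]
      simp only [Complex.real_smul]
      push_cast
      ring
    rw [decomp]
    -- bounds for the two integrals
    have habs : dist w z = ‖w - z‖ := Complex.dist_eq w z
    have hre : |w.re - z.re| ≤ ‖w - z‖ := by
      have := Complex.abs_re_le_norm (w - z); simpa using this
    have him' : |w.im - z.im| ≤ ‖w - z‖ := by
      have := Complex.abs_im_le_norm (w - z); simpa using this
    have bound1 : ‖∫ x : ℝ in z.re..w.re, (f (↑x + ↑z.im * I) - f z)‖ ≤
        (c / 2) * |w.re - z.re| := by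
      apply intervalIntegral.norm_integral_le_of_norm_le_const
      intro x hx
      rw [← dist_eq_norm]
      refine (hδ' ?_).1
      rw [Complex.dist_eq]
      have h1 : (↑x + ↑z.im * I) - z = ((x - z.re : ℝ) : ℂ) := by
        simp [Complex.ext_iff]
      rw [h1, Complex.norm_real, Real.norm_eq_abs]
      calc |x - z.re| ≤ |w.re - z.re| := abs_sub_le_of_uIoc hx
        _ ≤ ‖w - z‖ := hre
        _ < δ' := by rw [← habs]; linarith
    have bound2 : ‖∫ t : ℝ in z.im..w.im, (f (↑w.re + ↑t * I) - f z)‖ ≤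
        (c / 2) * |w.im - z.im| := by
      apply intervalIntegral.norm_integral_le_of_norm_le_const
      intro t ht
      rw [← dist_eq_norm]
      refine (hδ' ?_).1
      rw [Complex.dist_eq]
      calc ‖(↑w.re + ↑t * I) - z‖
          ≤ |((↑w.re + ↑t * I) - z).re| + |((↑w.re + ↑t * I) - z).im| :=
            Complex.norm_le_abs_re_add_abs_im _
        _ = |w.re - z.re| + |t - z.im| := by
            simp
        _ ≤ ‖w - z‖ + |w.im - z.im| :=
            add_le_add hre (abs_sub_le_of_uIoc ht)
        _ ≤ ‖w - z‖ + ‖w - z‖ := by linarith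
        _ < δ' := by rw [← habs]; linarith
    calc ‖(∫ x : ℝ in z.re..w.re, (f (↑x + ↑z.im * I) - f z)) +
          I * ∫ t : ℝ in z.im..w.im, (f (↑w.re + ↑t * I) - f z)‖
        ≤ ‖∫ x : ℝ in z.re..w.re, (f (↑x + ↑z.im * I) - f z)‖ +
          ‖I * ∫ t : ℝ in z.im..w.im, (f (↑w.re + ↑t * I) - f z)‖ := norm_add_le _ _
      _ = ‖∫ x : ℝ in z.re..w.re, (f (↑x + ↑z.im * I) - f z)‖ +
          ‖∫ t : ℝ in z.im..w.im, (f (↑w.re + ↑t * I) - f z)‖ := by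
          rw [norm_mul, Complex.norm_I, one_mul]
      _ ≤ (c / 2) * |w.re - z.re| + (c / 2) * |w.im - z.im| := add_le_add bound1 bound2
      _ ≤ (c / 2) * ‖w - z‖ + (c / 2) * ‖w - z‖ := by
          have hn : ‖w - z‖ = ‖w - z‖ := rfl
          rw [hn]
          exact add_le_add (mul_le_mul_of_nonneg_left hre (by linarith))
            (mul_le_mul_of_nonneg_left him' (by linarith))
      _ = c * ‖w - z‖ := by ring
  -- conclude
  have hPd : DifferentiableOn ℂ P S := fun ζ hζ =>
    (HD ζ hζ).differentiableAt.differentiableWithinAt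
  have hPan : AnalyticOnNhd ℂ P S := hPd.analyticOnNhd hSopen
  have hfan : AnalyticOnNhd ℂ (deriv P) S := hPan.deriv
  have hfd : DifferentiableAt ℂ (deriv P) z₀ := (hfan z₀ hz₀S).differentiableAt
  have hEq : deriv P =ᶠ[nhds z₀] f := by
    filter_upwards [hSopen.mem_nhds hz₀S] with ζ hζ
    exact (HD ζ hζ).deriv
  exact (hfd.congr_of_eventuallyEq hEq.symm).differentiableWithinAt

lemma moreraVertical {U : Set ℂ} (hU : IsOpen U) {f : ℂ → ℂ}
    (hc : ContinuousOn f U) (hd : DifferentiableOn ℂ f (U \ {z : ℂ | z.re = 0})) :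
    DifferentiableOn ℂ f U := by
  have hmul : Continuous (fun z : ℂ => I * z) := continuous_const.mul continuous_id
  have hopen' : IsOpen ((fun z : ℂ => I * z) ⁻¹' U) := hU.preimage hmul
  have hdopen : IsOpen (U \ {z : ℂ | z.re = 0}) :=
    hU.sdiff (isClosed_eq Complex.continuous_re continuous_const)
  have key : DifferentiableOn ℂ (fun z => f (I * z)) ((fun z : ℂ => I * z) ⁻¹' U) := by
    apply moreraHorizontal hopen'
    · exact hc.comp hmul.continuousOn (fun z hz => hz)
    · intro z hz
      obtain ⟨hzU, hzim⟩ := hz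
      have h1 : I * z ∈ U \ {ζ : ℂ | ζ.re = 0} := by
        refine ⟨hzU, ?_⟩
        simp only [mem_setOf_eq, Complex.mul_re, Complex.I_re, Complex.I_im]
        simpa using hzim
      have h2 : DifferentiableAt ℂ f (I * z) := hd.differentiableAt (hdopen.mem_nhds h1)
      exact (h2.comp z ((differentiableAt_const I).mul differentiableAt_id)).differentiableWithinAt
  intro z hz
  have hmem : -I * z ∈ (fun z : ℂ => I * z) ⁻¹' U := by
    simp only [mem_preimage]
    have : I * (-I * z) = z := by
      rw [← mul_assoc]; simp [Complex.I_mul_I]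
    rwa [this]
  have h3 : DifferentiableAt ℂ (fun z => f (I * z)) (-I * z) :=
    key.differentiableAt (hopen'.mem_nhds hmem)
  have h4 : DifferentiableAt ℂ (fun w => f (I * (-I * w))) z :=
    h3.comp z ((differentiableAt_const (-I)).mul differentiableAt_id)
  have h5 : (fun w => f (I * (-I * w))) = f := by
    funext w
    congr 1
    rw [← mul_assoc]; simp [Complex.I_mul_I]
  rw [h5] at h4
  exact h4.differentiableWithinAt

/-- Double Schwarz reflection from the quarter-disc to the punctured disc,
with control of the weighted L² norm. -/
theorem double_reflection_quadrant
    (r : ℝ) (hr : 0 < r) (F : ℂ → ℂ)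
    (Q : Set ℂ) (hQ : Q = {ζ : ℂ | ‖ζ‖ < r ∧ 0 < ζ.re ∧ 0 < ζ.im})
    (hF : DifferentiableOn ℂ F Q)
    (hFc : ContinuousOn F ({ζ : ℂ | ‖ζ‖ < r ∧ 0 ≤ ζ.re ∧ 0 ≤ ζ.im} \ {0}))
    (hDir : ∀ x : ℝ, 0 < x → x < r → (F (x : ℂ)).re = 0)
    (hNeu : ∀ y : ℝ, 0 < y → y < r → (F (Complex.I * (y : ℂ))).im = 0) :
    ∃ G : ℂ → ℂ, DifferentiableOn ℂ G (ball (0 : ℂ) r \ {0}) ∧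
      (∀ ζ : ℂ, ‖ζ‖ < r → 0 ≤ ζ.re → 0 ≤ ζ.im → ζ ≠ 0 → G ζ = F ζ) ∧
      (IntegrableOn (fun ζ => (‖F ζ‖) ^ 2 * (‖ζ‖) ^ 2) Q volume →
        IntegrableOn (fun ζ => (‖G ζ‖) ^ 2 * (‖ζ‖) ^ 2)
          (ball (0 : ℂ) r \ {0}) volume ∧
        ∫ ζ in ball (0 : ℂ) r \ {0}, (‖G ζ‖) ^ 2 * (‖ζ‖) ^ 2 ∂volume
          = 4 * ∫ ζ in Q, (‖F ζ‖) ^ 2 * (‖ζ‖) ^ 2 ∂volume) := by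
  subst hQ
  set Q : Set ℂ := {ζ : ℂ | ‖ζ‖ < r ∧ 0 < ζ.re ∧ 0 < ζ.im} with hQdef
  set F₁ : ℂ → ℂ := fun ζ =>
    if 0 ≤ ζ.im then F ζ else -((starRingEnd ℂ) (F ((starRingEnd ℂ) ζ))) with hF₁def
  set G : ℂ → ℂ := fun ζ =>
    if 0 ≤ ζ.re then F₁ ζ else (starRingEnd ℂ) (F₁ (-((starRingEnd ℂ) ζ))) with hGdef
  have hQopen : IsOpen Q := by
    have : Q = ((fun z : ℂ => ‖z‖) ⁻¹' Iio r) ∩ (Complex.re ⁻¹' Ioi 0) ∩ (Complex.im ⁻¹' Ioi 0) := by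
      ext ζ; simp [hQdef, and_assoc]
    rw [this]
    exact ((isOpen_Iio.preimage continuous_norm).inter
      (isOpen_Ioi.preimage Complex.continuous_re)).inter
      (isOpen_Ioi.preimage Complex.continuous_im)
  set A : Set ℂ := {ζ : ℂ | ‖ζ‖ < r ∧ 0 ≤ ζ.re} \ {0} with hAdef
  set U₁ : Set ℂ := {ζ : ℂ | ‖ζ‖ < r ∧ 0 < ζ.re} with hU₁def
  have hU₁open : IsOpen U₁ := by
    have : U₁ = ((fun z : ℂ => ‖z‖) ⁻¹' Iio r) ∩ (Complex.re ⁻¹' Ioi 0) := by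
      ext ζ; simp [hU₁def]
    rw [this]
    exact (isOpen_Iio.preimage continuous_norm).inter
      (isOpen_Ioi.preimage Complex.continuous_re)
  set B : Set ℂ := ball (0 : ℂ) r \ {0} with hBdef
  have hBopen : IsOpen B := isOpen_ball.sdiff isClosed_singleton
  -- useful small facts
  have hF₁c : ContinuousOn F₁ A := by
    apply ContinuousOn.if
    · intro a ⟨haA, hafr⟩
      rw [Complex.frontier_setOf_le_im] at hafr
      obtain ⟨⟨habs, hare⟩, hane⟩ := haA
      simp only [mem_setOf_eq] at hafr
      have hane0 : a ≠ 0 := hane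
      have hre_pos : 0 < a.re := by
        rcases hare.lt_or_eq with h | h
        · exact h
        · exfalso; exact hane0 (Complex.ext h.symm hafr)
      have ha_real : a = (a.re : ℂ) := Complex.ext (by simp) (by simp [hafr])
      have habs' : a.re < r := by
        have habs2 : ‖a‖ = |a.re| := by
          nth_rewrite 1 [ha_real]
          exact (Complex.norm_real _).trans (Real.norm_eq_abs _)
        rw [habs2, abs_of_pos hre_pos] at habs
        exact habs
      have hd := hDir a.re hre_pos habs'
      have hFa_re : (F a).re = 0 := by rw [ha_real]; exact hd
      have hconj : (starRingEnd ℂ) a = a := by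
        rw [Complex.conj_eq_iff_im]; exact hafr
      rw [hconj]
      apply Complex.ext
      · simp [hFa_re]
      · simp
    · apply hFc.mono
      intro ζ ⟨⟨⟨habs, hre⟩, hne⟩, him⟩
      have : 0 ≤ ζ.im := by
        have := (IsClosed.closure_eq (isClosed_le continuous_const Complex.continuous_im)) ▸ him
        exact this
      exact ⟨⟨habs, hre, this⟩, hne⟩
    · have hclos : closure {a : ℂ | ¬0 ≤ a.im} = {a : ℂ | a.im ≤ 0} := by
        have : {a : ℂ | ¬0 ≤ a.im} = {a : ℂ | a.im < 0} := by
          ext a; simp [not_le]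
        rw [this, Complex.closure_setOf_im_lt]
      rw [hclos]
      have hcont : ContinuousOn (fun ζ => F ((starRingEnd ℂ) ζ))
          (A ∩ {a : ℂ | a.im ≤ 0}) := by
        apply hFc.comp Complex.continuous_conj.continuousOn
        intro ζ ⟨⟨⟨habs, hre⟩, hne⟩, him⟩
        refine ⟨⟨?_, ?_, ?_⟩, ?_⟩
        · rwa [Complex.norm_conj]
        · simpa using hre
        · simp only [Complex.conj_im]; simpa using him
        · simp only [mem_singleton_iff, map_eq_zero]; exact hne
      exact (Complex.continuous_conj.comp_continuousOn hcont).neg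
  have hF₁d : DifferentiableOn ℂ F₁ U₁ := by
    apply moreraHorizontal hU₁open
    · apply hF₁c.mono
      intro ζ ⟨habs, hre⟩
      refine ⟨⟨habs, hre.le⟩, ?_⟩
      simp only [mem_singleton_iff]
      intro h; rw [h] at hre; simp at hre
    · intro ζ ⟨⟨habs, hre⟩, hnim⟩
      simp only [mem_setOf_eq] at hnim
      rcases lt_or_gt_of_ne hnim with hlt | hgt
      · -- lower quadrant : F₁ = -conj ∘ F ∘ conj near ζ
        have hconjQ : (starRingEnd ℂ) ζ ∈ Q := by
          refine ⟨?_, ?_, ?_⟩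
          · rwa [Complex.norm_conj]
          · simpa using hre
          · simp only [Complex.conj_im]; linarith
        have hFat : DifferentiableAt ℂ F ((starRingEnd ℂ) ζ) :=
          hF.differentiableAt (hQopen.mem_nhds hconjQ)
        have hder := hasDerivAt_conj_comp
          (F := fun w => -F w) (z := ζ) (hFat.hasDerivAt.neg)
        have hdat : DifferentiableAt ℂ
            (fun w => (starRingEnd ℂ) ((fun u => -F u) ((starRingEnd ℂ) w))) ζ :=
          hder.differentiableAt
        have hev : F₁ =ᶠ[nhds ζ]
            (fun w => (starRingEnd ℂ) ((fun u => -F u) ((starRingEnd ℂ) w))) := by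
          have hopen : IsOpen {z : ℂ | z.im < 0} :=
            isOpen_lt Complex.continuous_im continuous_const
          filter_upwards [hopen.mem_nhds hlt] with w hw
          simp only [hF₁def]
          rw [if_neg (not_le.2 hw)]
          simp [map_neg]
        exact (hdat.congr_of_eventuallyEq hev).differentiableWithinAt
      · have hQmem : ζ ∈ Q := ⟨habs, hre, hgt⟩
        have hFat : DifferentiableAt ℂ F ζ := hF.differentiableAt (hQopen.mem_nhds hQmem)
        have hev : F₁ =ᶠ[nhds ζ] F := by
          have hopen : IsOpen {z : ℂ | 0 < z.im} :=
            isOpen_lt continuous_const Complex.continuous_im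
          filter_upwards [hopen.mem_nhds hgt] with w hw
          simp only [hF₁def]
          rw [if_pos hw.le]
        exact (hFat.congr_of_eventuallyEq hev).differentiableWithinAt
  have hmemB : ∀ ζ : ℂ, ζ ∈ B ↔ (‖ζ‖ < r ∧ ζ ≠ 0) := by
    intro ζ
    rw [hBdef, mem_diff, mem_ball_zero_iff, mem_singleton_iff]
  have hF₁_real_axis : ∀ ζ : ℂ, ζ.re = 0 → ζ ≠ 0 → ‖ζ‖ < r → (F₁ ζ).im = 0 := by
    intro ζ hre hne habs
    have him_ne : ζ.im ≠ 0 := by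
      intro h; exact hne (Complex.ext hre h)
    have habs_im : |ζ.im| ≤ ‖ζ‖ := Complex.abs_im_le_norm ζ
    rcases lt_or_gt_of_ne him_ne with hlt | hgt
    · -- ζ.im < 0
      have heq2 : (starRingEnd ℂ) ζ = I * ((-ζ.im : ℝ) : ℂ) := by
        apply Complex.ext <;> simp [hre]
      have him_lt : -ζ.im < r := by
        have h1 : |ζ.im| = -ζ.im := abs_of_neg hlt
        linarith [habs_im.trans_lt habs]
      have hn := hNeu (-ζ.im) (by linarith) him_lt
      have hval : F₁ ζ = -((starRingEnd ℂ) (F ((starRingEnd ℂ) ζ))) := by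
        simp only [hF₁def]; rw [if_neg (not_le.2 hlt)]
      rw [hval, heq2]
      simp only [Complex.neg_im, Complex.conj_im, neg_neg]
      exact hn
    · have heq : ζ = I * ((ζ.im : ℝ) : ℂ) := by
        apply Complex.ext <;> simp [hre]
      have him_lt : ζ.im < r := by
        have : |ζ.im| = ζ.im := abs_of_pos hgt
        linarith [habs_im.trans_lt habs]
      have hn := hNeu ζ.im hgt him_lt
      simp only [hF₁def]
      rw [if_pos hgt.le]
      rw [heq]
      exact hn
  have hGc : ContinuousOn G B := by
    apply ContinuousOn.if
    · intro a ⟨haB, hafr⟩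
      rw [Complex.frontier_setOf_le_re] at hafr
      simp only [mem_setOf_eq] at hafr
      obtain ⟨habs, hane⟩ := (hmemB a).1 haB
      have hfix : -((starRingEnd ℂ) a) = a := by
        apply Complex.ext <;> simp [hafr]
      rw [hfix]
      have him0 : (F₁ a).im = 0 := hF₁_real_axis a hafr hane habs
      exact ((Complex.conj_eq_iff_im).2 him0).symm
    · apply hF₁c.mono
      intro ζ ⟨hζB, hcl⟩
      have hcl' : 0 ≤ ζ.re := by
        have := (IsClosed.closure_eq (isClosed_le continuous_const Complex.continuous_re)) ▸ hcl
        exact this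
      obtain ⟨habs, hne⟩ := (hmemB ζ).1 hζB
      exact ⟨⟨habs, hcl'⟩, hne⟩
    · have hclos : closure {a : ℂ | ¬0 ≤ a.re} = {a : ℂ | a.re ≤ 0} := by
        have : {a : ℂ | ¬0 ≤ a.re} = {a : ℂ | a.re < 0} := by
          ext a; simp [not_le]
        rw [this, Complex.closure_setOf_re_lt]
      rw [hclos]
      have hmaps : MapsTo (fun ζ : ℂ => -((starRingEnd ℂ) ζ)) (B ∩ {a : ℂ | a.re ≤ 0}) A := by
        intro ζ ⟨hζB, hre⟩
        obtain ⟨habs, hne⟩ := (hmemB ζ).1 hζB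
        refine ⟨⟨?_, ?_⟩, ?_⟩
        · simp only [norm_neg, Complex.norm_conj]
          exact habs
        · simp only [Complex.neg_re, Complex.conj_re]
          simpa using hre
        · simp only [mem_singleton_iff, neg_eq_zero, map_eq_zero]
          exact hne
      have hcont2 : ContinuousOn (fun ζ : ℂ => F₁ (-((starRingEnd ℂ) ζ)))
          (B ∩ {a : ℂ | a.re ≤ 0}) :=
        hF₁c.comp (Complex.continuous_conj.neg.continuousOn) hmaps
      exact Complex.continuous_conj.comp_continuousOn hcont2
  have hGd : DifferentiableOn ℂ G B := by
    apply moreraVertical hBopen hGc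
    intro ζ ⟨hζB, hnre⟩
    simp only [mem_setOf_eq] at hnre
    obtain ⟨habs, hne⟩ := (hmemB ζ).1 hζB
    rcases lt_or_gt_of_ne hnre with hlt | hgt
    · -- left half : G = conj ∘ F₁ ∘ (-conj)
      have hmemU : -((starRingEnd ℂ) ζ) ∈ U₁ := by
        refine ⟨?_, ?_⟩
        · simp only [norm_neg, Complex.norm_conj]; exact habs
        · simp only [Complex.neg_re, Complex.conj_re]; linarith
      have h1 : DifferentiableAt ℂ F₁ (-((starRingEnd ℂ) ζ)) :=
        hF₁d.differentiableAt (hU₁open.mem_nhds hmemU)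
      have h2 : DifferentiableAt ℂ (fun u => F₁ (-u)) ((starRingEnd ℂ) ζ) := by
        have := h1.comp ((starRingEnd ℂ) ζ) (differentiableAt_id.neg (𝕜 := ℂ) (f := id))
        exact this
      have hder := hasDerivAt_conj_comp (F := fun u => F₁ (-u)) (z := ζ)
        (h2.hasDerivAt)
      have hdat : DifferentiableAt ℂ
          (fun w => (starRingEnd ℂ) ((fun u => F₁ (-u)) ((starRingEnd ℂ) w))) ζ :=
        hder.differentiableAt
      have hev : G =ᶠ[nhds ζ]
          (fun w => (starRingEnd ℂ) ((fun u => F₁ (-u)) ((starRingEnd ℂ) w))) := by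
        have hopen : IsOpen {z : ℂ | z.re < 0} :=
          isOpen_lt Complex.continuous_re continuous_const
        filter_upwards [hopen.mem_nhds hlt] with w hw
        simp only [hGdef]
        rw [if_neg (not_le.2 hw)]
      exact (hdat.congr_of_eventuallyEq hev).differentiableWithinAt
    · have hmemU : ζ ∈ U₁ := ⟨habs, hgt⟩
      have h1 : DifferentiableAt ℂ F₁ ζ := hF₁d.differentiableAt (hU₁open.mem_nhds hmemU)
      have hev : G =ᶠ[nhds ζ] F₁ := by
        have hopen : IsOpen {z : ℂ | 0 < z.re} :=
          isOpen_lt continuous_const Complex.continuous_re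
        filter_upwards [hopen.mem_nhds hgt] with w hw
        simp only [hGdef]
        rw [if_pos hw.le]
      exact (h1.congr_of_eventuallyEq hev).differentiableWithinAt
  refine ⟨G, hGd, ?_, ?_⟩
  · intro ζ h1 h2 h3 h4
    show (if 0 ≤ ζ.re then F₁ ζ else _) = F ζ
    rw [if_pos h2]
    show (if 0 ≤ ζ.im then F ζ else _) = F ζ
    rw [if_pos h3]
  · intro hInt
    set g : ℂ → ℝ := fun ζ => (‖F ζ‖) ^ 2 * (‖ζ‖) ^ 2 with hgdef
    set h : ℂ → ℝ := fun ζ => (‖G ζ‖) ^ 2 * (‖ζ‖) ^ 2 with hhdef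
    -- measure preserving transformations
    have hconj_mp : MeasurePreserving (fun ζ : ℂ => (starRingEnd ℂ) ζ) volume volume :=
      Complex.conjLIE.measurePreserving
    have hconj_emb : MeasurableEmbedding (fun ζ : ℂ => (starRingEnd ℂ) ζ) :=
      Complex.conjLIE.toHomeomorph.measurableEmbedding
    have hneg_mp : MeasurePreserving (fun ζ : ℂ => -ζ) volume volume :=
      (LinearIsometryEquiv.neg ℝ (E := ℂ)).measurePreserving
    have hneg_emb : MeasurableEmbedding (fun ζ : ℂ => -ζ) :=
      (LinearIsometryEquiv.neg ℝ (E := ℂ)).toHomeomorph.measurableEmbedding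
    have hnc_mp : MeasurePreserving (fun ζ : ℂ => -((starRingEnd ℂ) ζ)) volume volume :=
      hneg_mp.comp hconj_mp
    have hnc_emb : MeasurableEmbedding (fun ζ : ℂ => -((starRingEnd ℂ) ζ)) :=
      hneg_emb.comp hconj_emb
    -- the four quadrant pieces
    set Q2 : Set ℂ := {ζ : ℂ | ‖ζ‖ < r ∧ 0 < ζ.re ∧ ζ.im < 0} with hQ2def
    set Q3 : Set ℂ := {ζ : ℂ | ‖ζ‖ < r ∧ ζ.re < 0 ∧ ζ.im < 0} with hQ3def
    set Q4 : Set ℂ := {ζ : ℂ | ‖ζ‖ < r ∧ ζ.re < 0 ∧ 0 < ζ.im} with hQ4def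
    have hQ2pre : Q2 = (fun ζ : ℂ => (starRingEnd ℂ) ζ) ⁻¹' Q := by
      ext ζ
      simp only [hQ2def, hQdef, mem_setOf_eq, mem_preimage, Complex.norm_conj,
        Complex.conj_re, Complex.conj_im]
      constructor
      · rintro ⟨h1, h2, h3⟩; exact ⟨h1, h2, by linarith⟩
      · rintro ⟨h1, h2, h3⟩; exact ⟨h1, h2, by linarith⟩
    have hQ3pre : Q3 = (fun ζ : ℂ => -ζ) ⁻¹' Q := by
      ext ζ
      simp only [hQ3def, hQdef, mem_setOf_eq, mem_preimage, norm_neg,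
        Complex.neg_re, Complex.neg_im]
      constructor
      · rintro ⟨h1, h2, h3⟩; exact ⟨h1, by linarith, by linarith⟩
      · rintro ⟨h1, h2, h3⟩; exact ⟨h1, by linarith, by linarith⟩
    have hQ4pre : Q4 = (fun ζ : ℂ => -((starRingEnd ℂ) ζ)) ⁻¹' Q := by
      ext ζ
      simp only [hQ4def, hQdef, mem_setOf_eq, mem_preimage, norm_neg, Complex.norm_conj,
        Complex.neg_re, Complex.neg_im, Complex.conj_re, Complex.conj_im]
      constructor
      · rintro ⟨h1, h2, h3⟩; exact ⟨h1, by linarith, by linarith⟩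
      · rintro ⟨h1, h2, h3⟩; exact ⟨h1, by linarith, by linarith⟩
    have hQm : MeasurableSet Q := hQopen.measurableSet
    have hQ2m : MeasurableSet Q2 := by
      rw [hQ2pre]; exact hconj_emb.measurable hQm
    have hQ3m : MeasurableSet Q3 := by
      rw [hQ3pre]; exact hneg_emb.measurable hQm
    have hQ4m : MeasurableSet Q4 := by
      rw [hQ4pre]; exact hnc_emb.measurable hQm
    -- values of the integrand on each piece
    have hEq1 : EqOn h g Q := by
      intro ζ hζ
      have : G ζ = F ζ := by
        simp only [hGdef, hF₁def]
        rw [if_pos hζ.2.1.le, if_pos hζ.2.2.le]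
      simp only [hhdef, hgdef, this]
    have hEq2 : EqOn h (g ∘ fun ζ : ℂ => (starRingEnd ℂ) ζ) Q2 := by
      intro ζ hζ
      have hval : G ζ = -((starRingEnd ℂ) (F ((starRingEnd ℂ) ζ))) := by
        simp only [hGdef, hF₁def]
        rw [if_pos hζ.2.1.le, if_neg (not_le.2 hζ.2.2)]
      simp only [hhdef, hgdef, hval, Function.comp_apply, norm_neg, Complex.norm_conj]
    have hEq3 : EqOn h (g ∘ fun ζ : ℂ => -ζ) Q3 := by
      intro ζ hζ
      have him : (-((starRingEnd ℂ) ζ)).im = ζ.im := by simp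
      have hval : G ζ = -(F (-ζ)) := by
        simp only [hGdef, hF₁def]
        rw [if_neg (not_le.2 hζ.2.1)]
        rw [if_neg (by rw [him]; exact not_le.2 hζ.2.2)]
        rw [show (starRingEnd ℂ) (-((starRingEnd ℂ) ζ)) = -ζ by simp]
        simp [map_neg]
      simp only [hhdef, hgdef, hval, Function.comp_apply, norm_neg]
    have hEq4 : EqOn h (g ∘ fun ζ : ℂ => -((starRingEnd ℂ) ζ)) Q4 := by
      intro ζ hζ
      have him : (-((starRingEnd ℂ) ζ)).im = ζ.im := by simp
      have hval : G ζ = (starRingEnd ℂ) (F (-((starRingEnd ℂ) ζ))) := by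
        simp only [hGdef, hF₁def]
        rw [if_neg (not_le.2 hζ.2.1)]
        rw [if_pos (by rw [him]; exact hζ.2.2.le)]
      simp only [hhdef, hgdef, hval, Function.comp_apply, norm_neg, Complex.norm_conj]
    -- integrability on each piece
    have hI1 : IntegrableOn h Q volume := hInt.congr_fun hEq1.symm hQm
    have hI2 : IntegrableOn h Q2 volume := by
      have : IntegrableOn (g ∘ fun ζ : ℂ => (starRingEnd ℂ) ζ) Q2 volume := by
        rw [hQ2pre]
        exact (hconj_mp.integrableOn_comp_preimage hconj_emb).2 hInt
      exact this.congr_fun hEq2.symm hQ2m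
    have hI3 : IntegrableOn h Q3 volume := by
      have : IntegrableOn (g ∘ fun ζ : ℂ => -ζ) Q3 volume := by
        rw [hQ3pre]
        exact (hneg_mp.integrableOn_comp_preimage hneg_emb).2 hInt
      exact this.congr_fun hEq3.symm hQ3m
    have hI4 : IntegrableOn h Q4 volume := by
      have : IntegrableOn (g ∘ fun ζ : ℂ => -((starRingEnd ℂ) ζ)) Q4 volume := by
        rw [hQ4pre]
        exact (hnc_mp.integrableOn_comp_preimage hnc_emb).2 hInt
      exact this.congr_fun hEq4.symm hQ4m
    -- integrals on each piece
    have hJ1 : ∫ ζ in Q, h ζ = ∫ ζ in Q, g ζ := setIntegral_congr_fun hQm hEq1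
    have hJ2 : ∫ ζ in Q2, h ζ = ∫ ζ in Q, g ζ := by
      rw [setIntegral_congr_fun hQ2m hEq2, hQ2pre]
      exact hconj_mp.setIntegral_preimage_emb hconj_emb g Q
    have hJ3 : ∫ ζ in Q3, h ζ = ∫ ζ in Q, g ζ := by
      rw [setIntegral_congr_fun hQ3m hEq3, hQ3pre]
      exact hneg_mp.setIntegral_preimage_emb hneg_emb g Q
    have hJ4 : ∫ ζ in Q4, h ζ = ∫ ζ in Q, g ζ := by
      rw [setIntegral_congr_fun hQ4m hEq4, hQ4pre]
      exact hnc_mp.setIntegral_preimage_emb hnc_emb g Q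
    -- the union
    set A4 : Set ℂ := (Q ∪ Q2) ∪ (Q3 ∪ Q4) with hA4def
    have d12 : Disjoint Q Q2 := by
      rw [Set.disjoint_left]
      rintro ζ ⟨_, _, h1⟩ ⟨_, _, h2⟩; linarith
    have d34 : Disjoint Q3 Q4 := by
      rw [Set.disjoint_left]
      rintro ζ ⟨_, _, h1⟩ ⟨_, _, h2⟩; linarith
    have dbig : Disjoint (Q ∪ Q2) (Q3 ∪ Q4) := by
      rw [Set.disjoint_left]
      rintro ζ (⟨_, h1, _⟩ | ⟨_, h1, _⟩) (⟨_, h2, _⟩ | ⟨_, h2, _⟩) <;> linarith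
    have hsub : A4 ⊆ B := by
      have hb : ∀ ζ : ℂ, ‖ζ‖ < r → ζ.re ≠ 0 → ζ ∈ B := by
        intro ζ h1 h2
        rw [hmemB]
        exact ⟨h1, fun hc => h2 (by rw [hc]; simp)⟩
      rintro ζ ((⟨h1, h2, _⟩ | ⟨h1, h2, _⟩) | (⟨h1, h2, _⟩ | ⟨h1, h2, _⟩))
      · exact hb ζ h1 (ne_of_gt h2)
      · exact hb ζ h1 (ne_of_gt h2)
      · exact hb ζ h1 (ne_of_lt h2)
      · exact hb ζ h1 (ne_of_lt h2)
    -- the leftover set is null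
    have hre0 : volume {z : ℂ | z.re = 0} = 0 := by
      have hset : {z : ℂ | z.re = 0} =
          Complex.measurableEquivRealProd ⁻¹' (({0} : Set ℝ) ×ˢ (univ : Set ℝ)) := by
        ext z
        simp [Complex.measurableEquivRealProd_apply, eq_comm]
      rw [hset, Complex.volume_preserving_equiv_real_prod.measure_preimage
        (((measurableSet_singleton (0:ℝ)).prod MeasurableSet.univ).nullMeasurableSet)]
      rw [Measure.volume_eq_prod, Measure.prod_prod]
      simp
    have him0 : volume {z : ℂ | z.im = 0} = 0 := by
      have hset : {z : ℂ | z.im = 0} =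
          Complex.measurableEquivRealProd ⁻¹' ((univ : Set ℝ) ×ˢ ({0} : Set ℝ)) := by
        ext z
        simp [Complex.measurableEquivRealProd_apply, eq_comm]
      rw [hset, Complex.volume_preserving_equiv_real_prod.measure_preimage
        ((MeasurableSet.univ.prod (measurableSet_singleton (0:ℝ))).nullMeasurableSet)]
      rw [Measure.volume_eq_prod, Measure.prod_prod]
      simp
    have hnull : volume (B \ A4) = 0 := by
      refine measure_mono_null ?_ (measure_union_null hre0 him0)
      · intro ζ ⟨hζB, hζn⟩
        by_contra hcon
        simp only [mem_union, mem_setOf_eq] at hcon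
        push_neg at hcon
        obtain ⟨hre_ne, him_ne⟩ := hcon
        obtain ⟨habs, _⟩ := (hmemB ζ).1 hζB
        apply hζn
        rcases lt_or_gt_of_ne hre_ne with hre | hre <;>
          rcases lt_or_gt_of_ne him_ne with him | him
        · exact Or.inr (Or.inl ⟨habs, hre, him⟩)
        · exact Or.inr (Or.inr ⟨habs, hre, him⟩)
        · exact Or.inl (Or.inr ⟨habs, hre, him⟩)
        · exact Or.inl (Or.inl ⟨habs, hre, him⟩)
    have hBeq : B =ᵐ[volume] A4 := by
      rw [MeasureTheory.ae_eq_set]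
      constructor
      · exact hnull
      · rw [Set.diff_eq_empty.2 hsub]
        exact measure_empty
    constructor
    · show IntegrableOn h B volume
      rw [IntegrableOn, Measure.restrict_congr_set hBeq]
      exact (hI1.union hI2).union (hI3.union hI4)
    · show ∫ ζ in B, h ζ = 4 * ∫ ζ in Q, g ζ
      rw [setIntegral_congr_set hBeq]
      rw [setIntegral_union dbig (hQ3m.union hQ4m) (hI1.union hI2) (hI3.union hI4),
        setIntegral_union d12 hQ2m hI1 hI2, setIntegral_union d34 hQ4m hI3 hI4,
        hJ1, hJ2, hJ3, hJ4]
      ring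
end

section
/- Reality of the leading coefficient: let δ > 0 and let f : ℂ → ℂ be continuous on S(δ) := {z ∈ ℂ : |z| < δ ∧ Im z ≥ 0} \ {0}. Suppose there exist A ∈ ℂ and M ≥ 0 such that |f(z) − A·z^{−1/2}| ≤ M for all z ∈ S(δ) (principal branch of z^{−1/2}), and that Im f(x) = 0 for every real x ∈ (−δ, 0). Then Re A = 0, i.e. A = i·α for some α ∈ ℝ. -/
open Complex

lemma neg_real_cpow_neg_half (t : ℝ) (ht : 0 < t) :
    ((-t : ℝ) : ℂ) ^ (-(1 : ℂ)/2) = -Complex.I * ((t ^ (-(1:ℝ)/2) : ℝ) : ℂ) := by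
  rw [Complex.ofReal_cpow_of_nonpos (by linarith : (-t:ℝ) ≤ 0)]
  have h1 : ((-(-t:ℝ) : ℝ) : ℂ) = ((t:ℝ) : ℂ) := by push_cast; ring
  rw [show (-(-t:ℝ):ℂ) = ((t:ℝ):ℂ) by push_cast; ring]
  have h2 : ((t:ℝ):ℂ) ^ (-(1:ℂ)/2) = ((t ^ (-(1:ℝ)/2) : ℝ) : ℂ) := by
    rw [Complex.ofReal_cpow ht.le]; norm_num
  rw [h2]
  have h3 : Complex.exp (↑Real.pi * Complex.I * (-(1:ℂ)/2)) = -Complex.I := by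
    have : (↑Real.pi * Complex.I * (-(1:ℂ)/2)) = ((-(Real.pi/2) : ℝ) : ℂ) * Complex.I := by
      push_cast; ring
    rw [this, Complex.exp_mul_I]
    simp [Real.cos_pi_div_two, Real.sin_pi_div_two]
  rw [h3]; ring

/-- Reality of the leading coefficient: the zero Neumann condition on the
negative real axis forces the pole coefficient to be purely imaginary. -/
theorem leading_coefficient_purely_imaginary
    (δ : ℝ) (hδ : 0 < δ) (f : ℂ → ℂ)
    (S : Set ℂ) (hS : S = {z : ℂ | ‖z‖ < δ ∧ 0 ≤ z.im} \ {0})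
    (hfc : ContinuousOn f S)
    (A : ℂ) (M : ℝ) (hM : 0 ≤ M)
    (hbound : ∀ z ∈ S, ‖f z - A * z ^ (-(1 : ℂ)/2)‖ ≤ M)
    (hNeu : ∀ x : ℝ, -δ < x → x < 0 → (f (x : ℂ)).im = 0) :
    A.re = 0 := by
  by_contra hA
  have hA' : 0 < |A.re| := abs_pos.mpr hA
  -- choose small t
  set t : ℝ := min (δ/2) (A.re^2 / (4*(M+1)^2)) with ht_def
  have ht : 0 < t := lt_min (by linarith) (by positivity)
  have htδ : t < δ := lt_of_le_of_lt (min_le_left _ _) (by linarith)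
  have hz : ((-t : ℝ) : ℂ) ∈ S := by
    rw [hS]
    constructor
    · constructor
      · simpa [Complex.norm_real, abs_of_pos ht] using htδ
      · simp
    · simp only [Set.mem_singleton_iff]
      intro h
      have : (-t : ℝ) = 0 := by exact_mod_cast h
      linarith
  have hb := hbound _ hz
  have him := hNeu (-t) (by linarith) (by linarith)
  set r : ℝ := t ^ (-(1:ℝ)/2) with hr_def
  have hr : 0 < r := Real.rpow_pos_of_pos ht _
  -- imaginary part of f z - A * z^(-1/2) is -0 + A.re * r
  have hcp := neg_real_cpow_neg_half t ht
  have key : (f ((-t:ℝ):ℂ) - A * ((-t:ℝ):ℂ) ^ (-(1:ℂ)/2)).im = A.re * r := by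
    rw [hcp]
    simp only [Complex.ofReal_neg] at him
    simp [Complex.sub_im, Complex.mul_im, Complex.mul_re, him]
    exact Or.inl hr_def.symm
  have h1 : |A.re * r| ≤ ‖f ((-t:ℝ):ℂ) - A * ((-t:ℝ):ℂ) ^ (-(1:ℂ)/2)‖ := by
    rw [← key]; exact Complex.abs_im_le_norm _
  have h2 : |A.re| * r ≤ M := by
    rw [abs_mul, abs_of_pos hr] at h1; linarith [h1.trans hb]
  -- but r ≥ 2(M+1)/|A.re|
  have hts : Real.sqrt t ≤ |A.re| / (2*(M+1)) := by
    have : t ≤ A.re^2 / (4*(M+1)^2) := min_le_right _ _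
    have h4 : (|A.re| / (2*(M+1)))^2 = A.re^2 / (4*(M+1)^2) := by
      rw [div_pow, _root_.sq_abs]; ring_nf
    calc Real.sqrt t ≤ Real.sqrt (A.re^2 / (4*(M+1)^2)) := Real.sqrt_le_sqrt this
      _ = |A.re| / (2*(M+1)) := by
          rw [← h4, Real.sqrt_sq (by positivity)]
  have hrs : r = (Real.sqrt t)⁻¹ := by
    rw [hr_def, show (-(1:ℝ)/2) = -(1/2) by ring, Real.rpow_neg ht.le,
      Real.sqrt_eq_rpow]
  have hst : 0 < Real.sqrt t := Real.sqrt_pos.mpr ht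
  have hfin : 2*(M+1) ≤ |A.re| * r := by
    rw [hrs, ← div_eq_mul_inv, le_div_iff₀ hst]
    calc 2*(M+1) * Real.sqrt t ≤ 2*(M+1) * (|A.re|/(2*(M+1))) := by
          apply mul_le_mul_of_nonneg_left hts; linarith
      _ = |A.re| := by field_simp
  linarith
end
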